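/- arXiv:0906.2896 — 9 statements merged into one kernel-verified Lean document; each statement's English description precedes it below -/
import Mathlib

section
/- Let X be a T0 topological space and Y a T1 topological space. If g₁, g₂ : X^c → Y are continuous functions satisfying g₁(closure{x}) = g₂(closure{x}) for every x ∈ X, then g₁ = g₂. In particular, the continuous extension to X^c of a continuous function f : X → Y is unique. -/
/-- A nonempty closed subset `S` of a topological space is *prime* if whenever
`S = F₁ ∪ F₂` with `F₁`, `F₂` closed, then `S = F₁` or `S = F₂`. -/
def IsPrimeClosed {X : Type*} [TopologicalSpace X] (S : Set X) : Prop :=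
  IsClosed S ∧ S.Nonempty ∧
    ∀ F₁ F₂ : Set X, IsClosed F₁ → IsClosed F₂ → S = F₁ ∪ F₂ → S = F₁ ∨ S = F₂

/-- The lower Vietoris topology on `Set X`, generated by the families
`{F | F ∩ U ≠ ∅}` for `U` open in `X`. -/
def lowerVietoris (X : Type*) [TopologicalSpace X] : TopologicalSpace (Set X) :=
  TopologicalSpace.generateFrom
    {V : Set (Set X) | ∃ U : Set X, IsOpen U ∧ V = {F : Set X | (F ∩ U).Nonempty}}

/-- The point-complete envelope `X^c`: the space of all closed prime subsets of `X`,
with the subspace topology inherited from the lower Vietoris topology. -/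
def PrimeClosedEnv (X : Type*) [TopologicalSpace X] : Type _ :=
  {S : Set X // IsPrimeClosed S}

instance (X : Type*) [TopologicalSpace X] : TopologicalSpace (PrimeClosedEnv X) :=
  TopologicalSpace.induced Subtype.val (lowerVietoris X)

theorem isPrimeClosed_closure_singleton {X : Type*} [TopologicalSpace X] (x : X) :
    IsPrimeClosed (closure ({x} : Set X)) := by
  refine ⟨isClosed_closure, ⟨x, subset_closure rfl⟩, ?_⟩
  intro F₁ F₂ h₁ h₂ hU
  have hx : x ∈ closure ({x} : Set X) := subset_closure rfl
  rw [hU] at hx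
  rcases hx with hx | hx
  · left
    apply Set.Subset.antisymm (closure_minimal (Set.singleton_subset_iff.mpr hx) h₁)
    rw [hU]; exact Set.subset_union_left
  · right
    apply Set.Subset.antisymm (closure_minimal (Set.singleton_subset_iff.mpr hx) h₂)
    rw [hU]; exact Set.subset_union_right

/-- The canonical map `x ↦ closure {x}` from `X` to its point-complete envelope. -/
def toEnv {X : Type*} [TopologicalSpace X] (x : X) : PrimeClosedEnv X :=
  ⟨closure {x}, isPrimeClosed_closure_singleton x⟩

/-- Continuous maps from `X^c` into a `T1` space agreeing on the canonical copy of the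
`T0` space `X` are equal; the continuous extension to `X^c` is unique. -/
theorem extension_to_env_unique {X Y : Type*} [TopologicalSpace X] [TopologicalSpace Y]
    [T0Space X] [T1Space Y] (g₁ g₂ : PrimeClosedEnv X → Y)
    (hg₁ : Continuous g₁) (hg₂ : Continuous g₂)
    (h : ∀ x : X, g₁ (toEnv x) = g₂ (toEnv x)) : g₁ = g₂ := by
  have mono : ∀ t : Set (Set X), (lowerVietoris X).IsOpen t →
      ∀ A B : Set X, A ⊆ B → A ∈ t → B ∈ t := by
    intro t ht
    induction ht with
    | basic s hs =>
      rcases hs with ⟨U, _, rfl⟩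
      rintro A B hAB ⟨y, hyA, hyU⟩
      exact ⟨y, hAB hyA, hyU⟩
    | univ => intro A B _ _; trivial
    | inter s₁ s₂ _ _ ih₁ ih₂ =>
      rintro A B hAB ⟨h1, h2⟩
      exact ⟨ih₁ A B hAB h1, ih₂ A B hAB h2⟩
    | sUnion S _ ih =>
      rintro A B hAB ⟨s, hs, hAs⟩
      exact ⟨s, hs, ih s hs A B hAB hAs⟩
  funext S
  obtain ⟨y, hy⟩ := S.2.2.1
  have hspec : S ⤳ toEnv y := by
    rw [specializes_iff_forall_open]
    rintro s hs hmem
    obtain ⟨t, ht, rfl⟩ : ∃ t, (lowerVietoris X).IsOpen t ∧ Subtype.val ⁻¹' t = s := hs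
    exact mono t ht _ S.1 (closure_minimal (Set.singleton_subset_iff.mpr hy) S.2.1) hmem
  have h1 : g₁ S = g₁ (toEnv y) := (hspec.map hg₁).eq
  have h2 : g₂ S = g₂ (toEnv y) := (hspec.map hg₂).eq
  rw [h1, h2, h y]
end

section
/- Let X be a T0 topological space. Then X^c is point-complete: every closed prime subset of the space X^c (taken with respect to the lower Vietoris subspace topology on X^c) is the closure in X^c of a singleton. -/
open TopologicalSpace Set in
/-- Auxiliary: in the generating subbasis of the lower Vietoris topology, opens are
upward closed with respect to inclusion. -/
lemma lowerVietoris_genOpen_mono {X : Type*} [TopologicalSpace X] {A B : Set X} (h : A ⊆ B)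
    {O : Set (Set X)}
    (hO : TopologicalSpace.GenerateOpen
      {V : Set (Set X) | ∃ U : Set X, IsOpen U ∧ V = {F : Set X | (F ∩ U).Nonempty}} O)
    (hA : A ∈ O) : B ∈ O := by
  induction hO with
  | basic V hV =>
    obtain ⟨U, hU, rfl⟩ := hV
    exact hA.mono (Set.inter_subset_inter_left _ h)
  | univ => trivial
  | inter s t _ _ ih1 ih2 => exact ⟨ih1 hA.1, ih2 hA.2⟩
  | sUnion s _ ih =>
    obtain ⟨t, ht, hAt⟩ := hA
    exact ⟨t, ht, ih t ht hAt⟩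

open Set in
lemma IsPrimeClosed.isIrreducible {X : Type*} [TopologicalSpace X] {A : Set X}
    (hA : IsPrimeClosed A) : IsIrreducible A := by
  refine ⟨hA.2.1, fun U V hU hV hAU hAV => ?_⟩
  by_contra h
  rw [Set.not_nonempty_iff_eq_empty] at h
  have hsplit : A = (A \ U) ∪ (A \ V) := by
    ext x
    constructor
    · intro hx
      by_cases hxU : x ∈ U
      · exact Or.inr ⟨hx, fun hxV => (Set.eq_empty_iff_forall_notMem.1 h x) ⟨hx, hxU, hxV⟩⟩
      · exact Or.inl ⟨hx, hxU⟩
    · rintro (hx | hx) <;> exact hx.1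
  rcases hA.2.2 _ _ (hA.1.sdiff hU) (hA.1.sdiff hV) hsplit with hh | hh
  · obtain ⟨x, hxA, hxU⟩ := hAU
    exact (hh ▸ hxA).2 hxU
  · obtain ⟨x, hxA, hxV⟩ := hAV
    exact (hh ▸ hxA).2 hxV

open Set in
lemma isClosed_lowerVietoris_subset {X : Type*} [TopologicalSpace X] {C : Set X}
    (hC : IsClosed C) : @IsClosed _ (lowerVietoris X) {F : Set X | F ⊆ C} := by
  letI := lowerVietoris X
  rw [← isOpen_compl_iff]
  have : {F : Set X | F ⊆ C}ᶜ = {F : Set X | (F ∩ Cᶜ).Nonempty} := by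
    ext F
    simp [Set.inter_compl_nonempty_iff]
  rw [this]
  exact TopologicalSpace.GenerateOpen.basic _ ⟨Cᶜ, hC.isOpen_compl, rfl⟩

open Set in
lemma isClosed_env_subset {X : Type*} [TopologicalSpace X] {C : Set X} (hC : IsClosed C) :
    IsClosed {A : PrimeClosedEnv X | A.val ⊆ C} :=
  isClosed_induced_iff (t := lowerVietoris X).2
    ⟨{F : Set X | F ⊆ C}, isClosed_lowerVietoris_subset hC, rfl⟩

open Set TopologicalSpace in
lemma mem_lowerVietoris_closure {X : Type*} [TopologicalSpace X] {𝒮 : Set (Set X)} {A : Set X}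
    (hA : IsIrreducible A)
    (h : ∀ U : Set X, IsOpen U → (A ∩ U).Nonempty → ∃ B ∈ 𝒮, (B ∩ U).Nonempty) :
    A ∈ @closure _ (lowerVietoris X) 𝒮 := by
  classical
  letI := lowerVietoris X
  have hb := TopologicalSpace.isTopologicalBasis_of_subbasis (rfl :
    lowerVietoris X = TopologicalSpace.generateFrom
      {V : Set (Set X) | ∃ U : Set X, IsOpen U ∧ V = {F : Set X | (F ∩ U).Nonempty}})
  rw [hb.mem_closure_iff]
  rintro o ⟨f, ⟨hf, hfs⟩, rfl⟩ hAo
  have hsel : ∀ V : f, ∃ U : Set X, IsOpen U ∧ (V : Set (Set X)) = {F | (F ∩ U).Nonempty} :=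
    fun V => hfs V.2
  choose U hUopen hUeq using hsel
  haveI : Finite f := hf.to_subtype
  have hAmem : ∀ V : f, (A ∩ U V).Nonempty := by
    intro V
    have : A ∈ (V : Set (Set X)) := hAo V V.2
    rwa [hUeq V] at this
  have hW : (A ∩ ⋂ V : f, U V).Nonempty := by
    have := isIrreducible_iff_sInter.mp hA ((Set.finite_range U).toFinset)
      (by simp only [Set.Finite.mem_toFinset, Set.mem_range]
          rintro u ⟨V, rfl⟩; exact hUopen V)
      (by simp only [Set.Finite.mem_toFinset, Set.mem_range]
          rintro u ⟨V, rfl⟩; exact hAmem V)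
    rwa [Set.Finite.coe_toFinset, Set.sInter_range] at this
  obtain ⟨B, hB𝒮, hBW⟩ := h (⋂ V : f, U V) (isOpen_iInter_of_finite hUopen) hW
  refine ⟨B, ?_, hB𝒮⟩
  intro V hV
  have hBU : (B ∩ U ⟨V, hV⟩).Nonempty :=
    hBW.mono (Set.inter_subset_inter_right _ (Set.iInter_subset _ (⟨V, hV⟩ : f)))
  have heq : V = {F : Set X | (F ∩ U ⟨V, hV⟩).Nonempty} := hUeq ⟨V, hV⟩
  rw [heq]
  exact hBU

open Set TopologicalSpace in
/-- For a `T0` space `X`, the envelope `X^c` is point-complete: every closed prime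
subset of `X^c` is the closure of a singleton. -/
theorem env_pointComplete (X : Type*) [TopologicalSpace X] [T0Space X]
    (S : Set (PrimeClosedEnv X)) (hS : IsPrimeClosed S) :
    ∃ p : PrimeClosedEnv X, S = closure {p} := by
  classical
  set T : Set X := closure (⋃ A ∈ S, (A : PrimeClosedEnv X).val) with hTdef
  have hTn : T.Nonempty := by
    obtain ⟨A0, hA0⟩ := hS.2.1
    obtain ⟨x, hx⟩ := A0.2.2.1
    exact ⟨x, subset_closure (Set.mem_biUnion hA0 hx)⟩
  have hsubT : ∀ A ∈ S, (A : PrimeClosedEnv X).val ⊆ T :=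
    fun A hA => (Set.subset_biUnion_of_mem hA).trans subset_closure
  have hT : IsPrimeClosed T := by
    refine ⟨isClosed_closure, hTn, ?_⟩
    intro F₁ F₂ h₁ h₂ hunion
    have hsplit : S = (S ∩ {A | A.val ⊆ F₁}) ∪ (S ∩ {A | A.val ⊆ F₂}) := by
      apply Set.Subset.antisymm
      · intro A hA
        have hAT : A.val ⊆ F₁ ∪ F₂ := hunion ▸ hsubT A hA
        have : A.val = (A.val ∩ F₁) ∪ (A.val ∩ F₂) := by
          rw [← Set.inter_union_distrib_left]
          exact (Set.inter_eq_left.2 hAT).symm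
        rcases A.2.2.2 _ _ (A.2.1.inter h₁) (A.2.1.inter h₂) this with hh | hh
        · exact Or.inl ⟨hA, fun x hx => (hh ▸ hx).2⟩
        · exact Or.inr ⟨hA, fun x hx => (hh ▸ hx).2⟩
      · rintro A (⟨hA, _⟩ | ⟨hA, _⟩) <;> exact hA
    rcases hS.2.2 _ _ (hS.1.inter (isClosed_env_subset h₁)) (hS.1.inter (isClosed_env_subset h₂))
        hsplit with hh | hh
    · left
      apply Set.Subset.antisymm
      · refine closure_minimal (Set.iUnion₂_subset fun A hA => ?_) h₁
        exact (hh ▸ hA : A ∈ S ∩ {A | A.val ⊆ F₁}).2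
      · rw [hunion]; exact Set.subset_union_left
    · right
      apply Set.Subset.antisymm
      · refine closure_minimal (Set.iUnion₂_subset fun A hA => ?_) h₂
        exact (hh ▸ hA : A ∈ S ∩ {A | A.val ⊆ F₂}).2
      · rw [hunion]; exact Set.subset_union_right
  refine ⟨⟨T, hT⟩, Set.Subset.antisymm ?_ ?_⟩
  · -- S ⊆ closure {p}
    intro A hA
    have h1 : A.val ∈ @closure _ (lowerVietoris X) {(⟨T, hT⟩ : PrimeClosedEnv X).val} := by
      letI := lowerVietoris X
      rw [mem_closure_iff]
      intro O hO hAO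
      exact ⟨T, lowerVietoris_genOpen_mono (hsubT A hA) hO hAO, rfl⟩
    rw [show ({(⟨T, hT⟩ : PrimeClosedEnv X).val} : Set (Set X)) =
        Subtype.val '' {(⟨T, hT⟩ : PrimeClosedEnv X)} by simp] at h1
    exact closure_induced (t := lowerVietoris X).2 h1
  · -- closure {p} ⊆ S
    have h2 : closure ({(⟨T, hT⟩ : PrimeClosedEnv X)} : Set (PrimeClosedEnv X)) ⊆
        {A : PrimeClosedEnv X | A.val ⊆ T} :=
      closure_minimal (Set.singleton_subset_iff.mpr
        (show (⟨T, hT⟩ : PrimeClosedEnv X).val ⊆ T from subset_rfl))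
        (isClosed_env_subset isClosed_closure)
    refine h2.trans ?_
    intro A hAT
    rw [← hS.1.closure_eq]
    refine (closure_induced (t := lowerVietoris X)).2 ?_
    refine mem_lowerVietoris_closure A.2.isIrreducible ?_
    intro U hU hAU
    obtain ⟨x, hxA, hxU⟩ := hAU
    have hxT : x ∈ closure (⋃ A ∈ S, (A : PrimeClosedEnv X).val) := hAT hxA
    rw [mem_closure_iff] at hxT
    obtain ⟨y, hyU, hy⟩ := hxT U hU hxU
    obtain ⟨B, hB, hyB⟩ := Set.mem_iUnion₂.1 hy
    exact ⟨B.val, Set.mem_image_of_mem _ hB, ⟨y, hyB, hyU⟩⟩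
end

section
/- Let X be a topological space. Every limit set of X is contained in a maximal limit set, and every maximal limit set is closed. -/
/-- `L` is a limit set if there is a net (equivalently, a proper filter) converging to
every point of `L`. -/
def IsLimitSet {X : Type*} [TopologicalSpace X] (L : Set X) : Prop :=
  ∃ F : Filter X, F.NeBot ∧ ∀ x ∈ L, F ≤ nhds x

/-- A maximal limit set is a limit set not properly contained in any other limit set. -/
def IsMaxLimitSet {X : Type*} [TopologicalSpace X] (M : Set X) : Prop :=
  IsLimitSet M ∧ ∀ L : Set X, IsLimitSet L → M ⊆ L → L = M

/-- `ℳℒ(X)`: the space of maximal limit sets of `X`, with the subspace topology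
inherited from the lower Vietoris topology. -/
def MLS (X : Type*) [TopologicalSpace X] : Type _ :=
  {M : Set X // IsMaxLimitSet M}

instance (X : Type*) [TopologicalSpace X] : TopologicalSpace (MLS X) :=
  TopologicalSpace.induced Subtype.val (lowerVietoris X)


open Filter Set

theorem isLimitSet_iff' {X : Type*} [TopologicalSpace X] {L : Set X} :
    IsLimitSet L ↔ Filter.NeBot (⨅ x ∈ L, nhds x) := by
  constructor
  · rintro ⟨F, hF, h⟩
    exact hF.mono (le_iInf₂ h)
  · intro h
    exact ⟨_, h, fun x hx => iInf₂_le x hx⟩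

/-- Every limit set is contained in a maximal limit set, and every maximal
limit set is closed. -/
theorem limitSet_subset_max_and_max_closed (X : Type*) [TopologicalSpace X] :
    (∀ L : Set X, IsLimitSet L → ∃ M : Set X, IsMaxLimitSet M ∧ L ⊆ M) ∧
    (∀ M : Set X, IsMaxLimitSet M → IsClosed M) :=  by
  constructor
  · intro L hL
    have key : ∀ c ⊆ {A : Set X | IsLimitSet A}, IsChain (· ⊆ ·) c → c.Nonempty →
        ∃ ub ∈ {A : Set X | IsLimitSet A}, ∀ s ∈ c, s ⊆ ub := by
      intro c hc hchain hne
      refine ⟨⋃₀ c, ?_, fun s hs => Set.subset_sUnion_of_mem hs⟩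
      rw [Set.mem_setOf_eq, isLimitSet_iff']
      have heq : (⨅ x ∈ ⋃₀ c, nhds x) = ⨅ A : c, ⨅ x ∈ (A : Set X), nhds x := by
        apply le_antisymm
        · exact le_iInf fun A => le_iInf₂ fun x hx => iInf₂_le x ⟨A, A.2, hx⟩
        · refine le_iInf₂ fun x hx => ?_
          obtain ⟨A, hAc, hxA⟩ := hx
          exact (iInf_le _ (⟨A, hAc⟩ : c)).trans (iInf₂_le x hxA)
      rw [heq]
      haveI : Nonempty c := hne.to_subtype
      apply Filter.iInf_neBot_of_directed'
      · intro A B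
        rcases hchain.total A.2 B.2 with h | h
        · exact ⟨B, le_iInf₂ fun x hx => iInf₂_le x (h hx), le_refl _⟩
        · exact ⟨A, le_refl _, le_iInf₂ fun x hx => iInf₂_le x (h hx)⟩
      · intro A
        exact isLimitSet_iff'.mp (hc A.2)
    obtain ⟨M, hLM, hMmem, hMmax⟩ := zorn_subset_nonempty {A : Set X | IsLimitSet A} key L hL
    exact ⟨M, ⟨hMmem, fun L' hL' hML' => subset_antisymm (hMmax hL' hML') hML'⟩, hLM⟩
  · intro M hM
    have hsub : closure M ⊆ M := by
      intro y hy
      set G := ⨅ x ∈ M, nhds x with hG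
      have hGne : G.NeBot := isLimitSet_iff'.mp hM.1
      have hlim : IsLimitSet (insert y M) := by
        refine ⟨G ⊓ nhds y, ?_, ?_⟩
        · rw [Filter.inf_neBot_iff]
          intro s hs t ht
          obtain ⟨t', ht't, ht'o, hyt'⟩ := mem_nhds_iff.mp ht
          obtain ⟨z, hzt', hzM⟩ := mem_closure_iff.mp hy t' ht'o hyt'
          have h0 : G ≤ nhds z := iInf₂_le z hzM
          have h1 : t' ∈ G := h0 (ht'o.mem_nhds hzt')
          obtain ⟨w, hw⟩ := hGne.nonempty_of_mem (Filter.inter_mem hs h1)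
          exact ⟨w, hw.1, ht't hw.2⟩
        · rintro x (rfl | hx)
          · exact inf_le_right
          · exact inf_le_left.trans (iInf₂_le x hx)
      have := hM.2 (insert y M) hlim (Set.subset_insert y M)
      rw [← this]
      exact Set.mem_insert y M
    exact isClosed_of_closure_subset hsub
end

section
/- Let X₁ and X₂ be topological spaces. The maximal limit sets of the product space X₁ × X₂ are precisely the sets of the form M₁ × M₂, where M₁ is a maximal limit set of X₁ and M₂ is a maximal limit set of X₂. Moreover, every limit set of X₁ × X₂ is contained in such a product M₁ × M₂. -/
open Filter Set Topology

/-- Every limit set is contained in a maximal limit set. -/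
lemma exists_maxLimitSet {X : Type*} [TopologicalSpace X] {L : Set X} (hL : IsLimitSet L) :
    ∃ M, IsMaxLimitSet M ∧ L ⊆ M := by
  have H : ∀ c ⊆ {S : Set X | IsLimitSet S}, IsChain (· ⊆ ·) c → c.Nonempty →
      ∃ ub ∈ {S : Set X | IsLimitSet S}, ∀ s ∈ c, s ⊆ ub := by
    rintro c hc hchain ⟨s₀, hs₀⟩
    refine ⟨⋃₀ c, ?_, fun s hs x hx => ⟨s, hs, hx⟩⟩
    have : Nonempty c := ⟨⟨s₀, hs₀⟩⟩
    refine ⟨⨅ s : c, ⨅ x ∈ (s : Set X), 𝓝 x, ?_, ?_⟩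
    · refine iInf_neBot_of_directed' ?_ ?_
      · rintro ⟨s, hs⟩ ⟨t, ht⟩
        rcases hchain.total hs ht with h | h
        · exact ⟨⟨t, ht⟩, le_iInf₂ fun x hx => iInf₂_le x (h hx),
            le_iInf₂ fun x hx => iInf₂_le x hx⟩
        · exact ⟨⟨s, hs⟩, le_iInf₂ fun x hx => iInf₂_le x hx,
            le_iInf₂ fun x hx => iInf₂_le x (h hx)⟩
      · rintro ⟨s, hs⟩
        obtain ⟨F, hF, hFle⟩ := hc hs
        exact hF.mono (le_iInf₂ hFle)
    · rintro x ⟨s, hs, hx⟩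
      exact (iInf_le _ (⟨s, hs⟩ : c)).trans (iInf₂_le x hx)
  obtain ⟨M, hLM, hMS, hmax⟩ := zorn_subset_nonempty {S : Set X | IsLimitSet S} H L hL
  exact ⟨M, ⟨hMS, fun L' hL' hML' => Set.Subset.antisymm (hmax hL' hML') hML'⟩, hLM⟩

/-- A maximal limit set in a nonempty space is nonempty. -/
lemma IsMaxLimitSet.nonempty {X : Type*} [TopologicalSpace X] [Nonempty X] {M : Set X}
    (hM : IsMaxLimitSet M) : M.Nonempty := by
  by_contra h
  rw [Set.not_nonempty_iff_eq_empty] at h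
  obtain ⟨x⟩ := ‹Nonempty X›
  have : ({x} : Set X) = M :=
    hM.2 {x} ⟨𝓝 x, inferInstance, by rintro y rfl; exact le_rfl⟩ (h ▸ Set.empty_subset _)
  simp [h] at this

lemma IsLimitSet.image_fst {X₁ X₂ : Type*} [TopologicalSpace X₁] [TopologicalSpace X₂]
    {L : Set (X₁ × X₂)} (hL : IsLimitSet L) : IsLimitSet (Prod.fst '' L) := by
  obtain ⟨F, hF, hle⟩ := hL
  refine ⟨F.map Prod.fst, hF.map _, ?_⟩
  rintro x ⟨p, hp, rfl⟩
  exact (continuous_fst.tendsto p).mono_left (hle p hp)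

lemma IsLimitSet.image_snd {X₁ X₂ : Type*} [TopologicalSpace X₁] [TopologicalSpace X₂]
    {L : Set (X₁ × X₂)} (hL : IsLimitSet L) : IsLimitSet (Prod.snd '' L) := by
  obtain ⟨F, hF, hle⟩ := hL
  refine ⟨F.map Prod.snd, hF.map _, ?_⟩
  rintro x ⟨p, hp, rfl⟩
  exact (continuous_snd.tendsto p).mono_left (hle p hp)

lemma IsLimitSet.prod {X₁ X₂ : Type*} [TopologicalSpace X₁] [TopologicalSpace X₂]
    {L₁ : Set X₁} {L₂ : Set X₂} (h₁ : IsLimitSet L₁) (h₂ : IsLimitSet L₂) :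
    IsLimitSet (L₁ ×ˢ L₂) := by
  obtain ⟨F₁, hF₁, hle₁⟩ := h₁
  obtain ⟨F₂, hF₂, hle₂⟩ := h₂
  refine ⟨F₁ ×ˢ F₂, Filter.prod_neBot.2 ⟨hF₁, hF₂⟩, ?_⟩
  rintro ⟨x₁, x₂⟩ ⟨hx₁, hx₂⟩
  rw [nhds_prod_eq]
  exact Filter.prod_mono (hle₁ x₁ hx₁) (hle₂ x₂ hx₂)

/-- The maximal limit sets of a product space are exactly the products of maximal limit
sets of the factors, and every limit set of the product is contained in such a product. -/
theorem maxLimitSet_prod_iff (X₁ X₂ : Type*) [TopologicalSpace X₁] [TopologicalSpace X₂] :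
    (∀ M : Set (X₁ × X₂), IsMaxLimitSet M ↔
      ∃ (M₁ : Set X₁) (M₂ : Set X₂), IsMaxLimitSet M₁ ∧ IsMaxLimitSet M₂ ∧ M = M₁ ×ˢ M₂) ∧
    (∀ L : Set (X₁ × X₂), IsLimitSet L →
      ∃ (M₁ : Set X₁) (M₂ : Set X₂), IsMaxLimitSet M₁ ∧ IsMaxLimitSet M₂ ∧ L ⊆ M₁ ×ˢ M₂) := by
  -- the backward/containment direction: a limit set is contained in a product of max sets
  have key : ∀ L : Set (X₁ × X₂), IsLimitSet L →
      ∃ (M₁ : Set X₁) (M₂ : Set X₂), IsMaxLimitSet M₁ ∧ IsMaxLimitSet M₂ ∧ L ⊆ M₁ ×ˢ M₂ := by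
    intro L hL
    obtain ⟨M₁, hM₁, hsub₁⟩ := exists_maxLimitSet hL.image_fst
    obtain ⟨M₂, hM₂, hsub₂⟩ := exists_maxLimitSet hL.image_snd
    refine ⟨M₁, M₂, hM₁, hM₂, fun p hp => ⟨hsub₁ ⟨p, hp, rfl⟩, hsub₂ ⟨p, hp, rfl⟩⟩⟩
  -- products of maximal limit sets are maximal
  have prodmax : ∀ (M₁ : Set X₁) (M₂ : Set X₂), IsMaxLimitSet M₁ → IsMaxLimitSet M₂ →
      IsMaxLimitSet (M₁ ×ˢ M₂) := by
    intro M₁ M₂ hM₁ hM₂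
    have hne₁ : Nonempty X₁ := by
      obtain ⟨F, hF, -⟩ := hM₁.1; exact hF.nonempty
    have hne₂ : Nonempty X₂ := by
      obtain ⟨F, hF, -⟩ := hM₂.1; exact hF.nonempty
    obtain ⟨y₁, hy₁⟩ := hM₁.nonempty
    obtain ⟨y₂, hy₂⟩ := hM₂.nonempty
    refine ⟨hM₁.1.prod hM₂.1, fun L hL hsub => ?_⟩
    have h₁ : Prod.fst '' L = M₁ := by
      refine hM₁.2 _ hL.image_fst fun x₁ hx₁ => ⟨(x₁, y₂), hsub ⟨hx₁, hy₂⟩, rfl⟩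
    have h₂ : Prod.snd '' L = M₂ := by
      refine hM₂.2 _ hL.image_snd fun x₂ hx₂ => ⟨(y₁, x₂), hsub ⟨hy₁, hx₂⟩, rfl⟩
    refine Set.Subset.antisymm (fun p hp => ⟨h₁ ▸ ⟨p, hp, rfl⟩, h₂ ▸ ⟨p, hp, rfl⟩⟩) hsub
  refine ⟨fun M => ⟨fun hM => ?_, ?_⟩, key⟩
  · obtain ⟨M₁, M₂, hM₁, hM₂, hsub⟩ := key M hM.1
    exact ⟨M₁, M₂, hM₁, hM₂, (hM.2 _ (hM₁.1.prod hM₂.1) hsub).symm⟩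
  · rintro ⟨M₁, M₂, hM₁, hM₂, rfl⟩
    exact prodmax M₁ M₂ hM₁ hM₂
end

section
/- Let Y be a topological space, D a dense subset of Y, and L a limit set of Y. Then there exists a net with values in D that converges to every point of L; equivalently, the filter generated by D together with the infimum of the neighbourhood filters of the points of L is proper (non-degenerate). -/
/-- If `D` is dense in `Y` and `L` is a limit set of `Y`, then there is a net with values
in `D` converging to every point of `L`; equivalently, the filter generated by `D`
together with the infimum of the neighbourhood filters of points of `L` is proper. -/
theorem limitSet_net_in_dense {Y : Type*} [TopologicalSpace Y] {D : Set Y} (hD : Dense D)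
    {L : Set Y} (hL : IsLimitSet L) :
    (∃ F : Filter Y, F.NeBot ∧ D ∈ F ∧ ∀ x ∈ L, F ≤ nhds x) ∧
    ((⨅ x ∈ L, nhds x) ⊓ Filter.principal D).NeBot := by
  obtain ⟨F, hF, hFle⟩ := hL
  set G : Filter Y := ⨅ x ∈ L, nhds x with hG
  have hFG : F ≤ G := le_iInf₂ hFle
  have hGneBot : G.NeBot := hF.mono hFG
  -- every set in G contains its interior which is also in G
  have hint : ∀ s ∈ G, interior s ∈ G := by
    intro s hs
    rw [hG, iInf_subtype'] at hs ⊢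
    rw [Filter.mem_iInf] at hs
    obtain ⟨I, hI, V, hV, rfl⟩ := hs
    haveI : Finite I := hI.to_subtype
    have h1 : (⋂ i : I, interior (V i)) ∈ ⨅ x : {x // x ∈ L}, nhds (x : Y) := by
      refine Filter.iInter_mem.2 fun i => ?_
      exact Filter.mem_iInf_of_mem (i : {x // x ∈ L}) (interior_mem_nhds.2 (hV i))
    refine Filter.mem_of_superset h1 ?_
    have hopen : IsOpen (⋂ i : I, interior (V i)) :=
      isOpen_iInter_of_finite fun i => isOpen_interior
    refine hopen.subset_interior_iff.2 ?_
    exact Set.iInter_mono fun i => interior_subset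
  have key : (G ⊓ Filter.principal D).NeBot := by
    rw [Filter.inf_principal_neBot_iff]
    intro U hU
    have h2 : (interior U).Nonempty :=
      Filter.nonempty_of_mem (hint U hU)
    obtain ⟨y, hy⟩ := hD.inter_open_nonempty _ isOpen_interior h2
    exact ⟨y, interior_subset hy.1, hy.2⟩
  refine ⟨⟨G ⊓ Filter.principal D, key, ?_, ?_⟩, key⟩
  · exact Filter.mem_inf_of_right (Filter.mem_principal_self D)
  · intro x hx
    exact le_trans inf_le_left (iInf₂_le x hx)
end

section
/- Let X₁, X₂, and Y be topological spaces and let φ be a homeomorphism of X₁ × X₂ onto a dense subset Z of Y. Suppose there is a continuous map ψ : Y → X₁ × X₂ such that ψ ∘ φ is the identity map of X₁ × X₂, and let M₁ and M₂ be maximal limit sets of X₁ and X₂ respectively such that ψ⁻¹(M₁ × M₂) equals the closure of φ(M₁ × M₂) in Y. Then ψ⁻¹(M₁ × M₂) is a maximal limit set of Y. -/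
/-- If `φ` is a homeomorphism of `X₁ × X₂` onto a dense subset of `Y`, `ψ` a continuous
retraction, and `M₁`, `M₂` are maximal limit sets with
`ψ⁻¹(M₁ × M₂) = closure (φ(M₁ × M₂))`, then `ψ⁻¹(M₁ × M₂)` is a maximal limit set of `Y`. -/
theorem preimage_prod_isMaxLimitSet {X₁ X₂ Y : Type*} [TopologicalSpace X₁]
    [TopologicalSpace X₂] [TopologicalSpace Y] (φ : X₁ × X₂ → Y)
    (hφ : Topology.IsEmbedding φ) (hdense : DenseRange φ)
    (ψ : Y → X₁ × X₂) (hψ : Continuous ψ) (hretr : ψ ∘ φ = id)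
    {M₁ : Set X₁} {M₂ : Set X₂} (hM₁ : IsMaxLimitSet M₁) (hM₂ : IsMaxLimitSet M₂)
    (hcl : ψ ⁻¹' (M₁ ×ˢ M₂) = closure (φ '' (M₁ ×ˢ M₂))) :
    IsMaxLimitSet (ψ ⁻¹' (M₁ ×ˢ M₂)) := by

  obtain ⟨⟨F₁, hF₁, hc₁⟩, hmax₁⟩ := hM₁
  obtain ⟨⟨F₂, hF₂, hc₂⟩, hmax₂⟩ := hM₂
  have hretr' : ∀ m : X₁ × X₂, ψ (φ m) = m := fun m => congrFun hretr m
  have hM₁ne : M₁.Nonempty := by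
    rcases Set.eq_empty_or_nonempty M₁ with h | h
    · exfalso
      obtain ⟨x⟩ := hF₁.nonempty
      have := hmax₁ {x} ⟨nhds x, inferInstance, by rintro y rfl; exact le_rfl⟩
        (h ▸ Set.empty_subset _)
      rw [h] at this
      exact Set.singleton_ne_empty x this
    · exact h
  have hM₂ne : M₂.Nonempty := by
    rcases Set.eq_empty_or_nonempty M₂ with h | h
    · exfalso
      obtain ⟨x⟩ := hF₂.nonempty
      have := hmax₂ {x} ⟨nhds x, inferInstance, by rintro y rfl; exact le_rfl⟩
        (h ▸ Set.empty_subset _)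
      rw [h] at this
      exact Set.singleton_ne_empty x this
    · exact h
  have hφsub : ∀ m ∈ M₁ ×ˢ M₂, φ m ∈ ψ ⁻¹' (M₁ ×ˢ M₂) := by
    intro m hm
    show ψ (φ m) ∈ M₁ ×ˢ M₂
    rw [hretr' m]; exact hm
  constructor
  · have hprod : (F₁ ×ˢ F₂).NeBot := Filter.prod_neBot.2 ⟨hF₁, hF₂⟩
    refine ⟨Filter.map φ (F₁ ×ˢ F₂), Filter.map_neBot, ?_⟩
    intro y hy
    rw [hcl] at hy
    intro s hs
    obtain ⟨U, hUs, hUo, hyU⟩ := mem_nhds_iff.1 hs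
    obtain ⟨w, hwU, z, hz, rfl⟩ := mem_closure_iff.1 hy U hUo hyU
    have hle : Filter.map φ (F₁ ×ˢ F₂) ≤ nhds (φ z) := by
      refine le_trans (Filter.map_mono ?_) ((hφ.continuous.tendsto z))
      rw [nhds_prod_eq]
      exact Filter.prod_mono (hc₁ _ hz.1) (hc₂ _ hz.2)
    exact Filter.mem_of_superset (hle (hUo.mem_nhds hwU)) hUs
  · intro L hL hsub
    obtain ⟨G, hG, hGc⟩ := hL
    apply Set.Subset.antisymm _ hsub
    intro y hy
    have h1 : ((fun w => (ψ w).1) '' L) = M₁ := by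
      apply hmax₁
      · exact ⟨Filter.map (fun w => (ψ w).1) G, Filter.map_neBot, by
          rintro x ⟨w, hw, rfl⟩
          exact le_trans (Filter.map_mono (hGc w hw))
            ((continuous_fst.comp hψ).tendsto w)⟩
      · intro m₁ hm₁
        obtain ⟨m₂, hm₂⟩ := hM₂ne
        refine ⟨φ (m₁, m₂), hsub (hφsub (m₁, m₂) ⟨hm₁, hm₂⟩), ?_⟩
        simp [hretr' (m₁, m₂)]
    have h2 : ((fun w => (ψ w).2) '' L) = M₂ := by
      apply hmax₂
      · exact ⟨Filter.map (fun w => (ψ w).2) G, Filter.map_neBot, by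
          rintro x ⟨w, hw, rfl⟩
          exact le_trans (Filter.map_mono (hGc w hw))
            ((continuous_snd.comp hψ).tendsto w)⟩
      · intro m₂ hm₂
        obtain ⟨m₁, hm₁⟩ := hM₁ne
        refine ⟨φ (m₁, m₂), hsub (hφsub (m₁, m₂) ⟨hm₁, hm₂⟩), ?_⟩
        simp [hretr' (m₁, m₂)]
    exact ⟨h1 ▸ ⟨y, hy, rfl⟩, h2 ▸ ⟨y, hy, rfl⟩⟩
end

section
/- Let X₁, X₂, and Y be topological spaces and let φ be a homeomorphism of X₁ × X₂ onto a dense subset Z of Y. Suppose there is a continuous map ψ : Y → X₁ × X₂ such that ψ ∘ φ is the identity map of X₁ × X₂, and such that for each pair (M₁, M₂) of maximal limit sets of X₁ and X₂, ψ⁻¹(M₁ × M₂) equals the closure of φ(M₁ × M₂) in Y. Then the map Θ(M₁, M₂) := ψ⁻¹(M₁ × M₂) from ℳℒ(X₁) × ℳℒ(X₂) to ℱ(Y) is continuous: for every open subset U of Y, the set {(M₁, M₂) ∈ ℳℒ(X₁) × ℳℒ(X₂) : ψ⁻¹(M₁ × M₂) ∩ U ≠ ∅} is open in ℳℒ(X₁)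 × ℳℒ(X₂). -/
lemma hit_open {X : Type*} [TopologicalSpace X] {V : Set X} (hV : IsOpen V) :
    IsOpen {M : MLS X | (M.1 ∩ V).Nonempty} := by
  have h : @IsOpen (Set X) (lowerVietoris X) {F : Set X | (F ∩ V).Nonempty} :=
    TopologicalSpace.GenerateOpen.basic _ ⟨V, hV, rfl⟩
  exact ⟨{F : Set X | (F ∩ V).Nonempty}, h, rfl⟩

/-- Under the hypotheses of the retraction lemma, the map
`Θ(M₁, M₂) = ψ⁻¹(M₁ × M₂)` is continuous: for every open `U ⊆ Y` the set of pairs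
`(M₁, M₂)` with `ψ⁻¹(M₁ × M₂) ∩ U ≠ ∅` is open in `ℳℒ(X₁) × ℳℒ(X₂)`. -/
theorem theta_continuous {X₁ X₂ Y : Type*} [TopologicalSpace X₁]
    [TopologicalSpace X₂] [TopologicalSpace Y] (φ : X₁ × X₂ → Y)
    (hφ : Topology.IsEmbedding φ) (hdense : DenseRange φ)
    (ψ : Y → X₁ × X₂) (hψ : Continuous ψ) (hretr : ψ ∘ φ = id)
    (hcl : ∀ (M₁ : Set X₁) (M₂ : Set X₂), IsMaxLimitSet M₁ → IsMaxLimitSet M₂ →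
      ψ ⁻¹' (M₁ ×ˢ M₂) = closure (φ '' (M₁ ×ˢ M₂)))
    {U : Set Y} (hU : IsOpen U) :
    IsOpen {p : MLS X₁ × MLS X₂ | ((ψ ⁻¹' (p.1.1 ×ˢ p.2.1)) ∩ U).Nonempty} := by
  have key : ∀ (M₁ : MLS X₁) (M₂ : MLS X₂),
      ((ψ ⁻¹' (M₁.1 ×ˢ M₂.1)) ∩ U).Nonempty ↔ ((M₁.1 ×ˢ M₂.1) ∩ φ ⁻¹' U).Nonempty := by
    intro M₁ M₂
    rw [hcl M₁.1 M₂.1 M₁.2 M₂.2]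
    constructor
    · rintro ⟨y, hy, hyU⟩
      have : (φ '' (M₁.1 ×ˢ M₂.1) ∩ U).Nonempty := by
        rcases mem_closure_iff.1 hy U hU hyU with ⟨z, hzU, hz⟩
        exact ⟨z, hz, hzU⟩
      rcases this with ⟨z, ⟨x, hx, rfl⟩, hzU⟩
      exact ⟨x, hx, hzU⟩
    · rintro ⟨x, hx, hxU⟩
      exact ⟨φ x, subset_closure ⟨x, hx, rfl⟩, hxU⟩
  have hsetEq : {p : MLS X₁ × MLS X₂ | ((ψ ⁻¹' (p.1.1 ×ˢ p.2.1)) ∩ U).Nonempty} =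
      ⋃ (V₁ : Set X₁) (V₂ : Set X₂) (_ : IsOpen V₁ ∧ IsOpen V₂ ∧ V₁ ×ˢ V₂ ⊆ φ ⁻¹' U),
        {p : MLS X₁ × MLS X₂ | (p.1.1 ∩ V₁).Nonempty ∧ (p.2.1 ∩ V₂).Nonempty} := by
    ext p
    simp only [Set.mem_setOf_eq, Set.mem_iUnion]
    rw [key p.1 p.2]
    constructor
    · rintro ⟨x, ⟨hx1, hx2⟩, hxU⟩
      rcases (isOpen_prod_iff.1 (hU.preimage hφ.continuous)) x.1 x.2 hxU with
        ⟨V₁, V₂, hV₁, hV₂, hx₁V, hx₂V, hsub⟩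
      exact ⟨V₁, V₂, ⟨hV₁, hV₂, hsub⟩, ⟨x.1, hx1, hx₁V⟩, ⟨x.2, hx2, hx₂V⟩⟩
    · rintro ⟨V₁, V₂, ⟨hV₁, hV₂, hsub⟩, ⟨x₁, hx₁, hx₁V⟩, ⟨x₂, hx₂, hx₂V⟩⟩
      exact ⟨(x₁, x₂), ⟨hx₁, hx₂⟩, hsub ⟨hx₁V, hx₂V⟩⟩
  rw [hsetEq]
  refine isOpen_iUnion fun V₁ => isOpen_iUnion fun V₂ => isOpen_iUnion fun h => ?_
  exact (((hit_open h.1).preimage continuous_fst).inter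
    ((hit_open h.2.1).preimage continuous_snd))
end

section
/- Let X₁, X₂, and Y be topological spaces and let φ be a homeomorphism of X₁ × X₂ onto a dense subset Z of Y. Suppose there is a continuous map ψ : Y → X₁ × X₂ such that ψ ∘ φ is the identity map of X₁ × X₂, and such that for each pair (M₁, M₂) of maximal limit sets of X₁ and X₂, ψ⁻¹(M₁ × M₂) equals the closure of φ(M₁ × M₂) in Y. Then the map Θ(M₁, M₂) := ψ⁻¹(M₁ × M₂) from ℳℒ(X₁) × ℳℒ(X₂) to ℳℒ(Y) is open onto its image: for all open sets V₁ ⊆ X₁ and V₂ ⊆ X₂, the image under Θ of {(M₁, M₂) ∈ ℳℒ(X₁) × ℳℒ(X₂) : M₁ ∩ V₁ ≠ ∅ and M₂ ∩ V₂ ≠ ∅} is relatively open in the image of Θ. -/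
/-- Under the hypotheses of the retraction lemma, the map `Θ(M₁, M₂) = ψ⁻¹(M₁ × M₂)` is
open onto its image: for open `V₁ ⊆ X₁`, `V₂ ⊆ X₂`, the image under `Θ` of the pairs
`(M₁, M₂)` with `M₁ ∩ V₁ ≠ ∅` and `M₂ ∩ V₂ ≠ ∅` is relatively open (for the lower
Vietoris topology) in the image of `Θ`. -/
theorem theta_openMap {X₁ X₂ Y : Type*} [TopologicalSpace X₁]
    [TopologicalSpace X₂] [TopologicalSpace Y] (φ : X₁ × X₂ → Y)
    (hφ : Topology.IsEmbedding φ) (hdense : DenseRange φ)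
    (ψ : Y → X₁ × X₂) (hψ : Continuous ψ) (hretr : ψ ∘ φ = id)
    (hcl : ∀ (M₁ : Set X₁) (M₂ : Set X₂), IsMaxLimitSet M₁ → IsMaxLimitSet M₂ →
      ψ ⁻¹' (M₁ ×ˢ M₂) = closure (φ '' (M₁ ×ˢ M₂)))
    {V₁ : Set X₁} {V₂ : Set X₂} (hV₁ : IsOpen V₁) (hV₂ : IsOpen V₂) :
    ∃ W : Set (Set Y), @IsOpen _ (lowerVietoris Y) W ∧
      (fun p : MLS X₁ × MLS X₂ => ψ ⁻¹' (p.1.1 ×ˢ p.2.1)) ''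
          {p : MLS X₁ × MLS X₂ | (p.1.1 ∩ V₁).Nonempty ∧ (p.2.1 ∩ V₂).Nonempty}
        = W ∩ Set.range (fun p : MLS X₁ × MLS X₂ => ψ ⁻¹' (p.1.1 ×ˢ p.2.1)) := by
  refine ⟨{F : Set Y | (F ∩ ψ ⁻¹' (V₁ ×ˢ V₂)).Nonempty}, ?_, ?_⟩
  · exact TopologicalSpace.GenerateOpen.basic _
      ⟨ψ ⁻¹' (V₁ ×ˢ V₂), (hV₁.prod hV₂).preimage hψ, rfl⟩
  · ext F
    constructor
    · rintro ⟨p, ⟨⟨x₁, hx₁M, hx₁V⟩, ⟨x₂, hx₂M, hx₂V⟩⟩, rfl⟩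
      refine ⟨⟨φ (x₁, x₂), ?_, ?_⟩, ⟨p, rfl⟩⟩
      · refine Set.mem_preimage.mpr ?_
        rw [show ψ (φ (x₁, x₂)) = (x₁, x₂) from congrFun hretr (x₁, x₂)]
        exact ⟨hx₁M, hx₂M⟩
      · refine Set.mem_preimage.mpr ?_
        rw [show ψ (φ (x₁, x₂)) = (x₁, x₂) from congrFun hretr (x₁, x₂)]
        exact ⟨hx₁V, hx₂V⟩
    · rintro ⟨⟨y, hyF, hyV⟩, ⟨p, rfl⟩⟩
      have hyM : ψ y ∈ p.1.1 ×ˢ p.2.1 := hyF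
      exact ⟨p, ⟨⟨(ψ y).1, hyM.1, hyV.1⟩, ⟨(ψ y).2, hyM.2, hyV.2⟩⟩, rfl⟩
end

section
/- There exist topological spaces X₁, X₂, and Y, a homeomorphism φ of X₁ × X₂ onto a dense subset of Y, a continuous map ψ : Y → X₁ × X₂ with ψ ∘ φ equal to the identity of X₁ × X₂, and maximal limit sets M₁ ⊆ X₁ and M₂ ⊆ X₂ such that ψ⁻¹(M₁ × M₂) is not equal to the closure of φ(M₁ × M₂) in Y. (For instance, one may take X₁ = X₂ = [0,1] with the usual topology, Y = ([0,1] × [0,1]) ∪ {y} for an extra point y, with topology generated by the open sets of the square together with all sets (U \ {(1,1)}) ∪ {y} for U an open neighbourhood of (1,1); φ the inclusion of the square; ψ the identity on the square and ψ(y) = (1,1); and M₁ = M₂ = {1}, for which closure(φ(M₁ × M₂)) = {(1,1)} while ψ⁻¹(M₁ × M₂) = {(1,1), y}.) -/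
open Filter Topology Set Function

/-- The counterexample topology on `Option ℝ`: opens are sets whose trace on `ℝ` is open,
and which, if they contain the extra point `none`, contain a punctured neighbourhood
of `0`. -/
def toY : TopologicalSpace (Option ℝ) where
  IsOpen S := IsOpen (some ⁻¹' S) ∧ (none ∈ S → (some ⁻¹' S) ∈ 𝓝[≠] (0 : ℝ))
  isOpen_univ := ⟨isOpen_univ, fun _ => univ_mem⟩
  isOpen_inter S T hS hT :=
    ⟨hS.1.inter hT.1, fun h => inter_mem (hS.2 h.1) (hT.2 h.2)⟩
  isOpen_sUnion c hc := by
    constructor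
    · rw [Set.preimage_sUnion]
      exact isOpen_biUnion fun S hS => (hc S hS).1
    · rintro ⟨S, hSc, hnS⟩
      exact mem_of_superset ((hc S hSc).2 hnS) (fun x hx => ⟨S, hSc, hx⟩)

/-- There exist spaces `X₁`, `X₂`, `Y`, a homeomorphism `φ` of `X₁ × X₂` onto a dense
subset of `Y`, a continuous retraction `ψ` with `ψ ∘ φ = id`, and maximal limit sets
`M₁`, `M₂` with `ψ⁻¹(M₁ × M₂) ≠ closure (φ(M₁ × M₂))`. -/
theorem exists_counterexample :
    ∃ (X₁ X₂ Y : Type) (t₁ : TopologicalSpace X₁) (t₂ : TopologicalSpace X₂)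
      (tY : TopologicalSpace Y) (φ : X₁ × X₂ → Y) (ψ : Y → X₁ × X₂)
      (M₁ : Set X₁) (M₂ : Set X₂),
      @Topology.IsEmbedding _ _ (@instTopologicalSpaceProd _ _ t₁ t₂) tY φ ∧
      @DenseRange _ tY _ φ ∧
      @Continuous _ _ tY (@instTopologicalSpaceProd _ _ t₁ t₂) ψ ∧
      ψ ∘ φ = id ∧
      @IsMaxLimitSet _ t₁ M₁ ∧ @IsMaxLimitSet _ t₂ M₂ ∧
      ψ ⁻¹' (M₁ ×ˢ M₂) ≠ @closure _ tY (φ '' (M₁ ×ˢ M₂)) := by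
  letI : TopologicalSpace (Option ℝ) := toY
  set φ : ℝ × Unit → Option ℝ := fun p => some p.1 with hφ
  set ψ : Option ℝ → ℝ × Unit := fun y => (y.getD 0, ()) with hψ
  have hψφ : ψ ∘ φ = id := by
    funext p
    rfl
  have hcontφ : Continuous φ := by
    rw [continuous_def]
    intro S hS
    exact hS.1.preimage continuous_fst
  have hcontψ : Continuous ψ := by
    rw [continuous_def]
    intro S hS
    refine ⟨(hS.preimage (Continuous.prodMk_left ())).preimage ?_, ?_⟩
    · exact continuous_id
    · intro h
      have h0 : ((fun x : ℝ => (x, ())) ⁻¹' S) ∈ 𝓝 (0 : ℝ) :=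
        (hS.preimage (Continuous.prodMk_left ())).mem_nhds h
      exact mem_nhdsWithin_of_mem_nhds h0
  have hemb : Topology.IsEmbedding φ := by
    have hli : LeftInverse ψ φ := fun p => congrFun hψφ p
    exact hli.isEmbedding hcontψ hcontφ
  have hdense : DenseRange φ := by
    rw [denseRange_iff_closure_range, Set.eq_univ_iff_forall]
    intro y
    rw [mem_closure_iff]
    intro S hS hyS
    match y with
    | Option.some x =>
        exact ⟨some x, hyS, ⟨(x, ()), rfl⟩⟩
    | Option.none =>
        obtain ⟨x, hx⟩ := Filter.nonempty_of_mem (hS.2 hyS)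
        exact ⟨some x, hx, ⟨(x, ()), rfl⟩⟩
  have hM1 : IsMaxLimitSet ({0} : Set ℝ) := by
    constructor
    · exact ⟨pure 0, pure_neBot, fun x hx => by
        rw [Set.mem_singleton_iff] at hx; subst hx; exact pure_le_nhds 0⟩
    · intro L hL hsub
      obtain ⟨F, hF, hFle⟩ := hL
      have h0 : F ≤ nhds 0 := hFle 0 (hsub rfl)
      ext x
      simp only [Set.mem_singleton_iff]
      constructor
      · intro hx
        have hxle : F ≤ nhds x := hFle x hx
        haveI := hF
        haveI : (nhds x ⊓ nhds (0 : ℝ)).NeBot := neBot_of_le (le_inf hxle h0)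
        exact t2_iff_nhds.mp inferInstance this
      · rintro rfl
        exact hsub rfl
  have hM2 : IsMaxLimitSet (Set.univ : Set Unit) := by
    constructor
    · exact ⟨pure (), pure_neBot, fun x _ => by
        cases x; exact pure_le_nhds ()⟩
    · intro L _ hsub
      exact Set.univ_subset_iff.mp hsub
  refine ⟨ℝ, Unit, Option ℝ, inferInstance, inferInstance, toY, φ, ψ, {0}, Set.univ,
    hemb, hdense, hcontψ, hψφ, hM1, hM2, ?_⟩
  intro h
  have himg : φ '' (({0} : Set ℝ) ×ˢ (Set.univ : Set Unit)) = {some 0} := by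
    ext y
    constructor
    · rintro ⟨⟨a, b⟩, ⟨ha, -⟩, rfl⟩
      simp only [Set.mem_singleton_iff] at ha ⊢
      rw [ha]
    · rintro rfl
      exact ⟨(0, ()), ⟨rfl, trivial⟩, rfl⟩
  have hmem : Option.none ∈ ψ ⁻¹' (({0} : Set ℝ) ×ˢ (Set.univ : Set Unit)) :=
    ⟨rfl, trivial⟩
  rw [h, himg] at hmem
  have hopen : IsOpen ({some 0}ᶜ : Set (Option ℝ)) := by
    refine ⟨?_, ?_⟩
    · have : (some ⁻¹' ({some 0}ᶜ : Set (Option ℝ))) = ({0}ᶜ : Set ℝ) := by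
        ext x
        simp
      rw [this]
      exact isOpen_compl_singleton
    · intro _
      refine mem_of_superset self_mem_nhdsWithin ?_
      intro x hx
      simp only [Set.mem_compl_iff, Set.mem_singleton_iff] at hx ⊢
      simpa using hx
  rw [mem_closure_iff] at hmem
  obtain ⟨y, hy1, hy2⟩ := hmem ({some 0}ᶜ) hopen (by simp)
  exact hy1 hy2
end
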